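/- Let β > 0, L ≥ 2, and 0 < P₁ < 1. Let mcF_β(fn) = (1+β²)·(1 − P₁ − Σ_{k=2}^L fn_k) / ( (1+β²)(1 − P₁) − Σ_{k=2}^L fn_k + fn₁ ) on the domain of fn ∈ ℝ^L with fn_k ≥ 0 for all k, Σ_{k=2}^L fn_k ≤ 1 − P₁, and fn₁ ≤ P₁. Then for all fn, fn' in this domain with mcF_β(fn') > mcF_β(fn), setting t' = mcF_β(fn'), one has mcF_β(fn') − mcF_β(fn) ≤ (1/(β²(1 − P₁))) · [ (1+β² − t')·Σ_{k=2}^L (fn_k − fn'_k) + t'·(fn₁ − fn'₁) ]. -/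
import Mathlib


/-- The multiclass micro-`F_β`-measure with default-class probability `P₁` and
per-class false-negative probabilities `fn`, for classes `k ∈ {1, …, L}` where class 1
is the default class. -/
noncomputable def multiclassMicroFbeta (β : ℝ) (L : ℕ) (P₁ : ℝ) (fn : ℕ → ℝ) : ℝ :=
  (1 + β ^ 2) * (1 - P₁ - ∑ k ∈ Finset.Icc 2 L, fn k) /
    ((1 + β ^ 2) * (1 - P₁) - (∑ k ∈ Finset.Icc 2 L, fn k) + fn 1)

/-- Discretization-factor bound for the multiclass micro-`F_β`-measure: for error
profiles `fn`, `fn'` in the domain with `mcF_β(fn') > mcF_β(fn)` and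
`t' = mcF_β(fn')`, the difference is at most
`(1/(β²(1−P₁)))·[(1+β²−t')Σ_{k=2}^L(fnₖ−fn'ₖ) + t'(fn₁−fn'₁)]`. -/
theorem multiclass_micro_Fbeta_discretization_bound (β : ℝ) (hβ : 0 < β)
    (L : ℕ) (hL : 2 ≤ L) (P₁ : ℝ) (hP₁ : 0 < P₁) (hP₁' : P₁ < 1)
    (fn fn' : ℕ → ℝ)
    (hfn : ∀ k ∈ Finset.Icc 1 L, 0 ≤ fn k)
    (hsum : ∑ k ∈ Finset.Icc 2 L, fn k ≤ 1 - P₁) (hfn1 : fn 1 ≤ P₁)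
    (hfn' : ∀ k ∈ Finset.Icc 1 L, 0 ≤ fn' k)
    (hsum' : ∑ k ∈ Finset.Icc 2 L, fn' k ≤ 1 - P₁) (hfn1' : fn' 1 ≤ P₁)
    (hlt : multiclassMicroFbeta β L P₁ fn' > multiclassMicroFbeta β L P₁ fn) :
    multiclassMicroFbeta β L P₁ fn' - multiclassMicroFbeta β L P₁ fn ≤
      (1 / (β ^ 2 * (1 - P₁))) *
        ((1 + β ^ 2 - multiclassMicroFbeta β L P₁ fn') *
            (∑ k ∈ Finset.Icc 2 L, (fn k - fn' k)) +
          multiclassMicroFbeta β L P₁ fn' * (fn 1 - fn' 1)) := by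
  have hf1 : 0 ≤ fn 1 := hfn 1 (by simp [Finset.mem_Icc]; omega)
  have hf1' : 0 ≤ fn' 1 := hfn' 1 (by simp [Finset.mem_Icc]; omega)
  have hP : (0:ℝ) < 1 - P₁ := by linarith
  have hb : (0:ℝ) < β ^ 2 := by positivity
  set S := ∑ k ∈ Finset.Icc 2 L, fn k with hS
  set S' := ∑ k ∈ Finset.Icc 2 L, fn' k with hS'
  have hsubsum : ∑ k ∈ Finset.Icc 2 L, (fn k - fn' k) = S - S' := by
    rw [Finset.sum_sub_distrib]
  set D := (1 + β ^ 2) * (1 - P₁) - S + fn 1 with hD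
  set D' := (1 + β ^ 2) * (1 - P₁) - S' + fn' 1 with hD'
  have hDge : β ^ 2 * (1 - P₁) ≤ D := by rw [hD]; nlinarith
  have hDge' : β ^ 2 * (1 - P₁) ≤ D' := by rw [hD']; nlinarith
  have hD0 : 0 < D := lt_of_lt_of_le (by positivity) hDge
  have hD0' : 0 < D' := lt_of_lt_of_le (by positivity) hDge'
  have ht : multiclassMicroFbeta β L P₁ fn = (1 + β ^ 2) * (1 - P₁ - S) / D := rfl
  have ht' : multiclassMicroFbeta β L P₁ fn' = (1 + β ^ 2) * (1 - P₁ - S') / D' := rfl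
  set t := multiclassMicroFbeta β L P₁ fn
  set t' := multiclassMicroFbeta β L P₁ fn'
  set N := (1 + β ^ 2 - t') * (S - S') + t' * (fn 1 - fn' 1) with hN
  have key : t' - t = N / D := by
    rw [hN, ht, ht']
    field_simp
    ring
  have hNpos : 0 ≤ N := by
    have h1 : 0 < N / D := by rw [← key]; linarith [hlt]
    rcases div_pos_iff.mp h1 with ⟨h, _⟩ | ⟨_, h⟩
    · linarith
    · linarith
  rw [hsubsum]
  rw [key, ← hN, one_div, inv_mul_eq_div]
  exact div_le_div_of_nonneg_left hNpos (by positivity) hDge
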